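/- Let σ > 0, u ≠ 0, and let (Y_j)_{j≥1} be an i.i.d. sequence of real random variables with law N(0,σ²). Define the ECF spot variance estimator σ̂²_k := −(2/u²)·log( max( (1/k)·∑_{j=1}^{k} cos(u·Y_j), k^{−1/2} ) ). Then σ̂²_k → σ² almost surely as k → ∞. (Consistency of the empirical-characteristic-function spot volatility estimator in the model with constant volatility and no jumps, the baseline case of Proposition 1.) -/

import Mathlib

open MeasureTheory ProbabilityTheory Real Finset Filter
open scoped NNReal

private lemma integral_cos_exp_neg_sq (u : ℝ) {v : ℝ} (hv : 0 < v) :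
    ∫ x : ℝ, Real.exp (-x ^ 2 / (2 * v)) * Real.cos (u * x)
      = Real.sqrt (2 * π * v) * Real.exp (-(u ^ 2 * v) / 2) := by
  have hb : ((-(2 * v)⁻¹ : ℝ) : ℂ).re < 0 := by
    simp only [Complex.ofReal_re]
    rw [neg_lt_zero]
    positivity
  have key := integral_cexp_quadratic hb (Complex.I * u) 0
  have hint := integrable_cexp_quadratic' hb (Complex.I * u) 0
  have hre : (∫ x : ℝ, (Complex.exp (((-(2 * v)⁻¹ : ℝ) : ℂ) * x ^ 2 + Complex.I * u * x + 0)).re)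
      = ((↑π / -((-(2 * v)⁻¹ : ℝ) : ℂ)) ^ (1 / 2 : ℂ)
          * Complex.exp (0 - (Complex.I * u) ^ 2 / (4 * ((-(2 * v)⁻¹ : ℝ) : ℂ)))).re :=
    (integral_re hint).trans (congrArg Complex.re key)
  have hlhs : ∀ x : ℝ, (Complex.exp (((-(2 * v)⁻¹ : ℝ) : ℂ) * x ^ 2 + Complex.I * u * x + 0)).re
      = Real.exp (-x ^ 2 / (2 * v)) * Real.cos (u * x) := by
    intro x
    rw [Complex.exp_re]
    have h1 : (((-(2 * v)⁻¹ : ℝ) : ℂ) * x ^ 2 + Complex.I * u * x + 0).re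
        = -x ^ 2 / (2 * v) := by
      simp [Complex.add_re, Complex.mul_re, ← Complex.ofReal_pow]
      ring
    have h2 : (((-(2 * v)⁻¹ : ℝ) : ℂ) * x ^ 2 + Complex.I * u * x + 0).im = u * x := by
      simp [Complex.add_im, Complex.mul_im, ← Complex.ofReal_pow]
    rw [h1, h2]
  rw [show (↑π / -((-(2 * v)⁻¹ : ℝ) : ℂ)) = ((2 * π * v : ℝ) : ℂ) by
        push_cast; field_simp] at hre
  rw [show ((0 : ℂ) - (Complex.I * u) ^ 2 / (4 * ((-(2 * v)⁻¹ : ℝ) : ℂ)))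
        = ((-(u ^ 2 * v) / 2 : ℝ) : ℂ) by
        have hvc : (v : ℂ) ≠ 0 := by exact_mod_cast hv.ne'
        rw [mul_pow, Complex.I_sq]
        push_cast
        field_simp
        ring] at hre
  rw [show (1 / 2 : ℂ) = ((1 / 2 : ℝ) : ℂ) by norm_num,
    ← Complex.ofReal_cpow (by positivity), ← Complex.ofReal_exp, ← Complex.ofReal_mul] at hre
  simp only [Complex.ofReal_re] at hre
  rw [← Real.sqrt_eq_rpow] at hre
  rw [← hre]
  exact integral_congr_ae (Filter.Eventually.of_forall fun x => (hlhs x).symm)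

private lemma integral_cos_gaussianReal (u : ℝ) {v : ℝ≥0} (hv : 0 < (v : ℝ)) :
    ∫ x, Real.cos (u * x) ∂(gaussianReal 0 v) = Real.exp (-(u ^ 2 * v) / 2) := by
  have hv0 : v ≠ 0 := by
    intro h; rw [h] at hv; simp at hv
  rw [gaussianReal_of_var_ne_zero 0 hv0]
  have hpdf : gaussianPDF 0 v
      = fun x => (↑(Real.toNNReal (gaussianPDFReal 0 v x)) : ENNReal) := rfl
  rw [hpdf, integral_withDensity_eq_integral_smul
    ((measurable_gaussianPDFReal 0 v).real_toNNReal) _]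
  have heq : ∀ x : ℝ, (Real.toNNReal (gaussianPDFReal 0 v x)) • Real.cos (u * x)
      = (Real.sqrt (2 * π * v))⁻¹ * (Real.exp (-x ^ 2 / (2 * v)) * Real.cos (u * x)) := by
    intro x
    rw [NNReal.smul_def, smul_eq_mul, Real.coe_toNNReal _ (gaussianPDFReal_nonneg 0 v x),
      gaussianPDFReal]
    ring_nf
  rw [integral_congr_ae (Filter.Eventually.of_forall heq), integral_const_mul,
    integral_cos_exp_neg_sq u hv]
  rw [← mul_assoc, inv_mul_cancel₀ (by positivity)]
  ring

/-- Consistency of the ECF spot variance estimator: for an i.i.d. `N(0,σ²)` sequence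
`(Y_j)` and `u ≠ 0`,
`σ̂²_k := −(2/u²)·log(max((1/k)∑_{j=1}^{k} cos(u·Y_j), k^{−1/2})) → σ²` almost surely. -/
theorem ecf_spot_variance_estimator_consistent {Ω : Type*} [MeasureSpace Ω]
    [IsProbabilityMeasure (ℙ : Measure Ω)]
    (σ u : ℝ) (hσ : 0 < σ) (hu : u ≠ 0)
    (Y : ℕ → Ω → ℝ) (hmeas : ∀ j, Measurable (Y j))
    (hindep : iIndepFun Y ℙ)
    (hlaw : ∀ j, Measure.map (Y j) ℙ = gaussianReal 0 ⟨σ ^ 2, sq_nonneg σ⟩)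
    (est : ℕ → Ω → ℝ)
    (hest : ∀ k ω, est k ω
      = -(2 / u ^ 2) * Real.log
          (max ((1 / (k : ℝ)) * ∑ j ∈ Finset.Icc 1 k, Real.cos (u * Y j ω))
            ((Real.sqrt k)⁻¹))) :
    ∀ᵐ ω ∂ℙ, Tendsto (fun k => est k ω) atTop (nhds (σ ^ 2)) := by
  set v : ℝ≥0 := ⟨σ ^ 2, sq_nonneg σ⟩ with hv
  have hvpos : 0 < (v : ℝ) := pow_pos hσ 2
  set c : ℝ := Real.exp (-(u ^ 2 * σ ^ 2) / 2) with hc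
  have hcpos : 0 < c := Real.exp_pos _
  have mcos : Measurable fun x : ℝ => Real.cos (u * x) :=
    Real.measurable_cos.comp (measurable_const_mul u)
  set X : ℕ → Ω → ℝ := fun i ω => Real.cos (u * Y (i + 1) ω) with hX
  have hXmeas : ∀ i, Measurable (X i) := fun i => mcos.comp (hmeas (i + 1))
  have hint : Integrable (X 0) ℙ := by
    refine Integrable.mono' (integrable_const 1) (hXmeas 0).aestronglyMeasurable ?_
    filter_upwards with ω
    simpa using Real.abs_cos_le_one _
  have hpind : Pairwise (Function.onFun (IndepFun · · ℙ) X) := fun i j hij =>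
    (hindep.indepFun (show i + 1 ≠ j + 1 by omega)).comp mcos mcos
  have hident : ∀ i, IdentDistrib (X i) (X 0) ℙ ℙ := by
    intro i
    have hY : IdentDistrib (Y (i + 1)) (Y 1) ℙ ℙ :=
      ⟨(hmeas _).aemeasurable, (hmeas _).aemeasurable, by rw [hlaw, hlaw]⟩
    exact hY.comp mcos
  have hmean : (∫ ω, X 0 ω ∂ℙ) = c := by
    have h1 : (∫ ω, X 0 ω ∂ℙ) = ∫ x, Real.cos (u * x) ∂(Measure.map (Y 1) ℙ) :=
      (integral_map (hmeas 1).aemeasurable mcos.aestronglyMeasurable).symm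
    rw [h1, hlaw 1, integral_cos_gaussianReal u hvpos]
    rfl
  have slln := strong_law_ae_real X hint hpind hident
  rw [hmean] at slln
  have hB : Tendsto (fun k : ℕ => (Real.sqrt k)⁻¹) atTop (nhds 0) := by
    apply Tendsto.inv_tendsto_atTop
    have h2 : Tendsto (fun x : ℝ => x ^ (1 / 2 : ℝ)) atTop atTop :=
      tendsto_rpow_atTop (by norm_num)
    exact (h2.comp tendsto_natCast_atTop_atTop).congr fun k => by
      rw [Function.comp_apply, ← Real.sqrt_eq_rpow]
  filter_upwards [slln] with ω h
  have hsum : ∀ k : ℕ, (∑ j ∈ Finset.Icc 1 k, Real.cos (u * Y j ω))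
      = ∑ i ∈ range k, X i ω := by
    intro k
    rw [← Finset.Ico_add_one_right_eq_Icc, Finset.sum_Ico_eq_sum_range]
    norm_num
    exact Finset.sum_congr rfl fun i _ => by rw [Nat.add_comm]
  have hA : Tendsto (fun k : ℕ =>
      (1 / (k : ℝ)) * ∑ j ∈ Finset.Icc 1 k, Real.cos (u * Y j ω)) atTop (nhds c) := by
    refine h.congr fun k => ?_
    rw [hsum k, one_div, div_eq_inv_mul]
  have hmax : Tendsto (fun k : ℕ =>
      max ((1 / (k : ℝ)) * ∑ j ∈ Finset.Icc 1 k, Real.cos (u * Y j ω)) ((Real.sqrt k)⁻¹))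
      atTop (nhds c) := by
    have := hA.max hB
    rwa [max_eq_left hcpos.le] at this
  have hlog : Tendsto (fun k : ℕ =>
      Real.log (max ((1 / (k : ℝ)) * ∑ j ∈ Finset.Icc 1 k, Real.cos (u * Y j ω))
        ((Real.sqrt k)⁻¹))) atTop (nhds (-(u ^ 2 * σ ^ 2) / 2)) := by
    have := ((Real.continuousAt_log hcpos.ne').tendsto).comp hmax
    rwa [hc, Real.log_exp] at this
  have hfinal := hlog.const_mul (-(2 / u ^ 2))
  have hval : -(2 / u ^ 2) * (-(u ^ 2 * σ ^ 2) / 2) = σ ^ 2 := by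
    have hu2 : u ^ 2 ≠ 0 := pow_ne_zero 2 hu
    field_simp
  rw [hval] at hfinal
  exact hfinal.congr fun k => (hest k ω).symm
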